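/- arXiv:2311.07565 — 6 statements merged into one kernel-verified Lean document; each statement's English description precedes it below -/
import Mathlib

section
/- Let μ: ℝ → ℝ be continuously differentiable with μ' ≥ 0 and satisfying μ'(u) ≤ μ'(u')·e^{M|u−u'|} for all u, u'. Define the secant slope α(u,u') = (μ(u) − μ(u'))/(u − u') for u ≠ u' and α(u,u) = μ'(u). Then for all u, u': μ'(u)·h(−M|u−u'|) ≤ α(u,u') ≤ μ'(u)·h(M|u−u'|), where h(x) = (e^x − 1)/x for x ≠ 0 and h(0) = 1. -/
-- ∫ exp (M*(b-t)) over a..b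
lemma int_exp_b (M a b : ℝ) (hM : M ≠ 0) :
    ∫ t in a..b, Real.exp (M * (b - t)) = (Real.exp (M * (b - a)) - 1) / M := by
  have hD : ∀ t ∈ Set.uIcc a b,
      HasDerivAt (fun s => Real.exp (M * (b - s)) / (-M)) (Real.exp (M * (b - t))) t := by
    intro t _
    have h1 : HasDerivAt (fun s : ℝ => M * (b - s)) (-M) t := by
      simpa using ((hasDerivAt_id t).const_sub b).const_mul M
    have h2 := (Real.hasDerivAt_exp (M * (b - t))).comp t h1
    have h3 := h2.div_const (-M)
    rw [mul_div_assoc, div_self (neg_ne_zero.mpr hM), mul_one] at h3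
    exact h3
  have hint : IntervalIntegrable (fun t => Real.exp (M * (b - t))) MeasureTheory.volume a b :=
    (Real.continuous_exp.comp (by continuity)).intervalIntegrable a b
  rw [intervalIntegral.integral_eq_sub_of_hasDerivAt hD hint]
  have : M * (b - b) = 0 := by ring
  rw [this, Real.exp_zero, div_sub_div_same, div_neg, ← neg_div, neg_sub]

lemma int_exp_a (M a b : ℝ) (hM : M ≠ 0) :
    ∫ t in a..b, Real.exp (M * (t - a)) = (Real.exp (M * (b - a)) - 1) / M := by
  have hD : ∀ t ∈ Set.uIcc a b,
      HasDerivAt (fun s => Real.exp (M * (s - a)) / M) (Real.exp (M * (t - a))) t := by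
    intro t _
    have h1 : HasDerivAt (fun s : ℝ => M * (s - a)) M t := by
      simpa using ((hasDerivAt_id t).sub_const a).const_mul M
    have h2 := (Real.hasDerivAt_exp (M * (t - a))).comp t h1
    have h3 := h2.div_const M
    rw [mul_div_assoc, div_self hM, mul_one] at h3
    exact h3
  have hint : IntervalIntegrable (fun t => Real.exp (M * (t - a))) MeasureTheory.volume a b :=
    (Real.continuous_exp.comp (by continuity)).intervalIntegrable a b
  rw [intervalIntegral.integral_eq_sub_of_hasDerivAt hD hint]
  have : M * (a - a) = 0 := by ring
  rw [this, Real.exp_zero]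
  ring

theorem stmt_2 (μ μ' : ℝ → ℝ) (M : ℝ) (hM : 0 < M)
    (hd : ∀ u, HasDerivAt μ (μ' u) u)
    (hcont : Continuous μ')
    (hpos : ∀ u, 0 ≤ μ' u)
    (hgrow : ∀ u u' : ℝ, μ' u ≤ μ' u' * Real.exp (M * |u - u'|))
    (α : ℝ → ℝ → ℝ)
    (hα : ∀ u u' : ℝ, α u u' = if u = u' then μ' u else (μ u - μ u') / (u - u'))
    (h : ℝ → ℝ)
    (hh : ∀ x : ℝ, h x = if x = 0 then 1 else (Real.exp x - 1) / x) :
    ∀ u u' : ℝ,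
      μ' u * h (-(M * |u - u'|)) ≤ α u u' ∧ α u u' ≤ μ' u * h (M * |u - u'|) := by
  have hM' : M ≠ 0 := ne_of_gt hM
  -- FTC
  have hftc : ∀ a b : ℝ, μ b - μ a = ∫ t in a..b, μ' t := by
    intro a b
    exact (intervalIntegral.integral_eq_sub_of_hasDerivAt (fun t _ => hd t)
      (hcont.intervalIntegrable a b)).symm
  -- upper bound with c = b
  have Ub : ∀ a b : ℝ, a ≤ b → (∫ t in a..b, μ' t) ≤ μ' b * ((Real.exp (M * (b - a)) - 1) / M) := by
    intro a b hab
    have hmono : (∫ t in a..b, μ' t) ≤ ∫ t in a..b, μ' b * Real.exp (M * (b - t)) := by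
      apply intervalIntegral.integral_mono_on hab (hcont.intervalIntegrable a b)
        ((continuous_const.mul (Real.continuous_exp.comp (by continuity))).intervalIntegrable a b)
      intro t ht
      have := hgrow t b
      have habs : |t - b| = b - t := by
        rw [abs_of_nonpos (by linarith [ht.2])]; ring
      rwa [habs] at this
    calc (∫ t in a..b, μ' t) ≤ ∫ t in a..b, μ' b * Real.exp (M * (b - t)) := hmono
      _ = μ' b * ∫ t in a..b, Real.exp (M * (b - t)) := by
          rw [intervalIntegral.integral_const_mul]
      _ = μ' b * ((Real.exp (M * (b - a)) - 1) / M) := by rw [int_exp_b M a b hM']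
  -- lower bound with c = b : μ' b * exp (-(M*(b-t))) ≤ μ' t
  have Lb : ∀ a b : ℝ, a ≤ b →
      μ' b * ((Real.exp (-(M * (b - a))) - 1) / (-M)) ≤ ∫ t in a..b, μ' t := by
    intro a b hab
    have hmono : (∫ t in a..b, μ' b * Real.exp ((-M) * (b - t))) ≤ ∫ t in a..b, μ' t := by
      apply intervalIntegral.integral_mono_on hab
        ((continuous_const.mul (Real.continuous_exp.comp (by continuity))).intervalIntegrable a b)
        (hcont.intervalIntegrable a b)
      intro t ht
      have hg := hgrow b t
      have habs : |b - t| = b - t := abs_of_nonneg (by linarith [ht.2])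
      rw [habs] at hg
      have hexp : 0 < Real.exp (M * (b - t)) := Real.exp_pos _
      have : μ' b * Real.exp (-(M * (b - t))) ≤ μ' t := by
        rw [Real.exp_neg]
        rw [mul_inv_le_iff₀ hexp]
        linarith
      calc μ' b * Real.exp ((-M) * (b - t)) = μ' b * Real.exp (-(M * (b - t))) := by ring_nf
        _ ≤ μ' t := this
    calc μ' b * ((Real.exp (-(M * (b - a))) - 1) / (-M))
        = μ' b * ((Real.exp ((-M) * (b - a)) - 1) / (-M)) := by ring_nf
      _ = μ' b * ∫ t in a..b, Real.exp ((-M) * (b - t)) := by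
          rw [int_exp_b (-M) a b (neg_ne_zero.mpr hM')]
      _ = ∫ t in a..b, μ' b * Real.exp ((-M) * (b - t)) := by
          rw [intervalIntegral.integral_const_mul]
      _ ≤ ∫ t in a..b, μ' t := hmono
  -- upper bound with c = a
  have Ua : ∀ a b : ℝ, a ≤ b → (∫ t in a..b, μ' t) ≤ μ' a * ((Real.exp (M * (b - a)) - 1) / M) := by
    intro a b hab
    have hmono : (∫ t in a..b, μ' t) ≤ ∫ t in a..b, μ' a * Real.exp (M * (t - a)) := by
      apply intervalIntegral.integral_mono_on hab (hcont.intervalIntegrable a b)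
        ((continuous_const.mul (Real.continuous_exp.comp (by continuity))).intervalIntegrable a b)
      intro t ht
      have := hgrow t a
      have habs : |t - a| = t - a := abs_of_nonneg (by linarith [ht.1])
      rwa [habs] at this
    calc (∫ t in a..b, μ' t) ≤ ∫ t in a..b, μ' a * Real.exp (M * (t - a)) := hmono
      _ = μ' a * ∫ t in a..b, Real.exp (M * (t - a)) := by
          rw [intervalIntegral.integral_const_mul]
      _ = μ' a * ((Real.exp (M * (b - a)) - 1) / M) := by rw [int_exp_a M a b hM']
  -- lower bound with c = a
  have La : ∀ a b : ℝ, a ≤ b →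
      μ' a * ((Real.exp (-(M * (b - a))) - 1) / (-M)) ≤ ∫ t in a..b, μ' t := by
    intro a b hab
    have hmono : (∫ t in a..b, μ' a * Real.exp ((-M) * (t - a))) ≤ ∫ t in a..b, μ' t := by
      apply intervalIntegral.integral_mono_on hab
        ((continuous_const.mul (Real.continuous_exp.comp (by continuity))).intervalIntegrable a b)
        (hcont.intervalIntegrable a b)
      intro t ht
      have hg := hgrow a t
      have habs : |a - t| = t - a := by
        rw [abs_of_nonpos (by linarith [ht.1])]; ring
      rw [habs] at hg
      have hexp : 0 < Real.exp (M * (t - a)) := Real.exp_pos _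
      have : μ' a * Real.exp (-(M * (t - a))) ≤ μ' t := by
        rw [Real.exp_neg]
        rw [mul_inv_le_iff₀ hexp]
        linarith
      calc μ' a * Real.exp ((-M) * (t - a)) = μ' a * Real.exp (-(M * (t - a))) := by ring_nf
        _ ≤ μ' t := this
    calc μ' a * ((Real.exp (-(M * (b - a))) - 1) / (-M))
        = μ' a * ((Real.exp ((-M) * (b - a)) - 1) / (-M)) := by ring_nf
      _ = μ' a * ∫ t in a..b, Real.exp ((-M) * (t - a)) := by
          rw [int_exp_a (-M) a b (neg_ne_zero.mpr hM')]
      _ = ∫ t in a..b, μ' a * Real.exp ((-M) * (t - a)) := by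
          rw [intervalIntegral.integral_const_mul]
      _ ≤ ∫ t in a..b, μ' t := hmono
  intro u u'
  by_cases heq : u = u'
  · subst heq
    simp only [hα, if_pos rfl, sub_self, abs_zero, mul_zero, neg_zero]
    rw [hh 0, if_pos rfl, mul_one]
    exact ⟨le_refl _, le_refl _⟩
  · have hd0 : |u - u'| > 0 := abs_pos.mpr (sub_ne_zero.mpr heq)
    have hMd : M * |u - u'| ≠ 0 := by positivity
    have hMd' : -(M * |u - u'|) ≠ 0 := neg_ne_zero.mpr hMd
    rw [hα u u', if_neg heq, hh, hh, if_neg hMd, if_neg hMd']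
    rcases lt_or_gt_of_ne heq with hlt | hgt
    · -- u < u'
      set d := u' - u with hdd
      have hdpos : (0:ℝ) < d := by simp [hdd]; linarith
      have habs : |u - u'| = d := by rw [abs_of_nonpos (by linarith)]; ring
      have hne : u' - u ≠ 0 := sub_ne_zero.mpr (Ne.symm heq)
      have hαeq : (μ u - μ u') / (u - u') = (∫ t in u..u', μ' t) / d := by
        rw [← hftc u u', hdd, div_eq_div_iff (sub_ne_zero.mpr heq) hne]
        ring
      rw [hαeq, habs]
      constructor
      · rw [le_div_iff₀ hdpos]
        have hrw : μ' u * ((Real.exp (-(M * d)) - 1) / -(M * d)) * d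
            = μ' u * ((Real.exp (-(M * (u' - u))) - 1) / (-M)) := by
          rw [hdd]; field_simp
        rw [hrw]
        exact La u u' (le_of_lt hlt)
      · rw [div_le_iff₀ hdpos]
        have hrw : μ' u * ((Real.exp (M * d) - 1) / (M * d)) * d
            = μ' u * ((Real.exp (M * (u' - u)) - 1) / M) := by
          rw [hdd]; field_simp
        rw [hrw]
        exact Ua u u' (le_of_lt hlt)
    · -- u' < u
      set d := u - u' with hdd
      have hdpos : (0:ℝ) < d := by simp [hdd]; linarith
      have habs : |u - u'| = d := abs_of_nonneg (by linarith)
      have hαeq : (μ u - μ u') / (u - u') = (∫ t in u'..u, μ' t) / d := by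
        rw [← hftc u' u]
      rw [hαeq, habs]
      constructor
      · rw [le_div_iff₀ hdpos]
        have hrw : μ' u * ((Real.exp (-(M * d)) - 1) / -(M * d)) * d
            = μ' u * ((Real.exp (-(M * (u - u'))) - 1) / (-M)) := by
          rw [hdd]; field_simp
        rw [hrw]
        exact Lb u' u (le_of_lt hgt)
      · rw [div_le_iff₀ hdpos]
        have hrw : μ' u * ((Real.exp (M * d) - 1) / (M * d)) * d
            = μ' u * ((Real.exp (M * (u - u')) - 1) / M) := by
          rw [hdd]; field_simp
        rw [hrw]
        exact Ub u' u (le_of_lt hgt)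
end

section
/- Let Q be a probability measure on ℝ with cumulant generating function ψ(u) = log ∫ e^{uy} Q(dy) finite on an open interval containing u. Let μ = ψ' and suppose the family is M-self-concordant, i.e., μ'(v) ≤ μ'(w)·e^{M|v−w|} for all v, w in the domain interior. Then for the tilted measure Q_u (with density e^{yu − ψ(u)} w.r.t. Q), its cumulant generating function satisfies ψ_{Q_u}(s) ≤ s·μ(u) + s²·μ'(u) for all |s| ≤ log(2)/M (assuming u + s is in the domain interior). -/
open MeasureTheory

theorem stmt_4 (Q : Measure ℝ) [IsProbabilityMeasure Q]
    (U : Set ℝ) (hU : IsOpen U) (hconv : Convex ℝ U)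
    (ψ μ μ' : ℝ → ℝ) (M : ℝ) (hM : 0 < M)
    (hψ : ∀ u ∈ U, ψ u = Real.log (∫ y, Real.exp (u * y) ∂Q))
    (hint : ∀ u ∈ U, Integrable (fun y => Real.exp (u * y)) Q)
    (hd1 : ∀ u ∈ U, HasDerivAt ψ (μ u) u)
    (hd2 : ∀ u ∈ U, HasDerivAt μ (μ' u) u)
    (hpos : ∀ u ∈ U, 0 ≤ μ' u)
    (hsc : ∀ v ∈ U, ∀ w ∈ U, μ' v ≤ μ' w * Real.exp (M * |v - w|))
    (u s : ℝ) (hu : u ∈ U) (hus : u + s ∈ U)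
    (hs : |s| ≤ Real.log 2 / M) :
    Real.log (∫ y, Real.exp (s * y)
        ∂(Q.withDensity fun y => ENNReal.ofReal (Real.exp (y * u - ψ u))))
      ≤ s * μ u + s ^ 2 * μ' u := by
  -- Step 1: LHS = ψ (u+s) - ψ u
  have hmeas : Measurable (fun y : ℝ => Real.toNNReal (Real.exp (y * u - ψ u))) := by
    fun_prop
  have hIpos : 0 < ∫ y, Real.exp ((u + s) * y) ∂Q := integral_exp_pos (hint _ hus)
  have hLHS : Real.log (∫ y, Real.exp (s * y)
        ∂(Q.withDensity fun y => ENNReal.ofReal (Real.exp (y * u - ψ u))))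
      = ψ (u + s) - ψ u := by
    have h1 : (∫ y, Real.exp (s * y)
        ∂(Q.withDensity fun y => ENNReal.ofReal (Real.exp (y * u - ψ u))))
        = Real.exp (-ψ u) * ∫ y, Real.exp ((u + s) * y) ∂Q := by
      rw [show (fun y : ℝ => ENNReal.ofReal (Real.exp (y * u - ψ u)))
          = fun y => ((fun y : ℝ => Real.toNNReal (Real.exp (y * u - ψ u))) y : ENNReal)
          from rfl]
      rw [integral_withDensity_eq_integral_smul hmeas, ← integral_const_mul]
      congr 1 with y
      simp only [NNReal.smul_def, Real.coe_toNNReal _ (Real.exp_nonneg _), smul_eq_mul,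
        ← Real.exp_add]
      ring_nf
    rw [h1, Real.log_mul (Real.exp_ne_zero _) hIpos.ne', Real.log_exp,
      hψ _ hus]
    ring
  rw [hLHS]
  -- segment facts
  have hUt : ∀ t ∈ Set.uIcc 0 s, u + t ∈ U := by
    intro t ht
    apply hconv.ordConnected.uIcc_subset hu hus
    rw [Set.mem_uIcc] at ht ⊢
    rcases ht with ⟨h1, h2⟩ | ⟨h1, h2⟩
    · left; constructor <;> linarith
    · right; constructor <;> linarith
  -- self-concordance bound along the segment
  have hbound : ∀ t ∈ Set.uIcc 0 s, μ' (u + t) ≤ 2 * μ' u := by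
    intro t ht
    have hts : |t| ≤ |s| := by
      rw [Set.mem_uIcc] at ht
      rcases ht with ⟨h1, h2⟩ | ⟨h1, h2⟩
      · rw [abs_of_nonneg h1]; exact h2.trans (le_abs_self s)
      · rw [abs_of_nonpos h2]
        have := neg_abs_le s
        linarith
    have h2 : μ' (u + t) ≤ μ' u * Real.exp (M * |u + t - u|) := hsc _ (hUt t ht) u hu
    have h3 : Real.exp (M * |u + t - u|) ≤ 2 := by
      rw [show u + t - u = t by ring]
      calc Real.exp (M * |t|) ≤ Real.exp (Real.log 2) := by
            apply Real.exp_le_exp.2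
            rw [← le_div_iff₀' hM]
            exact hts.trans hs
        _ = 2 := Real.exp_log (by norm_num)
    calc μ' (u + t) ≤ μ' u * Real.exp (M * |u + t - u|) := h2
      _ ≤ μ' u * 2 := by
          exact mul_le_mul_of_nonneg_left h3 (hpos u hu)
      _ = 2 * μ' u := by ring
  -- the comparison function
  set F : ℝ → ℝ := fun t => ψ (u + t) - ψ u - t * μ u - t ^ 2 * μ' u with hF
  have hF' : ∀ t, u + t ∈ U →
      HasDerivAt F (μ (u + t) - μ u - 2 * t * μ' u) t := by
    intro t ht
    have h1 : HasDerivAt (fun t : ℝ => ψ (u + t)) (μ (u + t)) t := by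
      have := (hd1 _ ht).comp t ((hasDerivAt_id t).const_add u)
      simpa [Function.comp_def] using this
    have h2 : HasDerivAt (fun t : ℝ => t * μ u) (μ u) t := by
      simpa using (hasDerivAt_id t).mul_const (μ u)
    have h3 : HasDerivAt (fun t : ℝ => t ^ 2 * μ' u) (2 * t * μ' u) t := by
      simpa using (hasDerivAt_pow 2 t).mul_const (μ' u)
    exact ((h1.sub_const (ψ u)).sub h2).sub h3
  -- MVT bound on derivative of F
  have hμcont : ∀ t ∈ Set.uIcc 0 s, ContinuousAt μ (u + t) := fun t ht =>
    (hd2 _ (hUt t ht)).continuousAt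
  have hderiv_le : ∀ x ∈ Set.uIcc 0 s, x ≠ 0 →
      ∃ r ∈ Set.uIcc 0 s, μ (u + x) - μ u = μ' (u + r) * x := by
    intro x hx hx0
    rcases hx0.lt_or_gt with hneg | hposx
    · -- x < 0 : interval [u+x, u]
      have hsub : Set.Icc (u + x) u ⊆ (fun r => u + r) '' Set.uIcc 0 s := by
        intro y hy
        refine ⟨y - u, ?_, by ring⟩
        rw [Set.mem_uIcc] at hx ⊢
        rcases hx with ⟨h1, _⟩ | ⟨h1, h2⟩
        · exact absurd h1 (not_le.2 hneg)
        · right; constructor <;> [linarith [hy.1]; linarith [hy.2]]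
      obtain ⟨c, hc, hcs⟩ := exists_hasDerivAt_eq_slope μ μ' (show u + x < u by linarith)
        (fun y hy => by
          obtain ⟨r, hr, rfl⟩ := hsub hy
          exact (hμcont r hr).continuousWithinAt)
        (fun y hy => by
          obtain ⟨r, hr, rfl⟩ := hsub (Set.Ioo_subset_Icc_self hy)
          exact hd2 _ (hUt r hr))
      obtain ⟨r, hr, rfl⟩ := hsub (Set.Ioo_subset_Icc_self hc)
      refine ⟨r, hr, ?_⟩
      rw [eq_div_iff (by intro h; apply hx0; linarith)] at hcs
      linear_combination hcs
    · -- x > 0 : interval [u, u+x]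
      have hsub : Set.Icc u (u + x) ⊆ (fun r => u + r) '' Set.uIcc 0 s := by
        intro y hy
        refine ⟨y - u, ?_, by ring⟩
        rw [Set.mem_uIcc] at hx ⊢
        rcases hx with ⟨h1, h2⟩ | ⟨_, h2⟩
        · left; constructor <;> [linarith [hy.1]; linarith [hy.2]]
        · exact absurd h2 (not_le.2 hposx)
      obtain ⟨c, hc, hcs⟩ := exists_hasDerivAt_eq_slope μ μ' (show u < u + x by linarith)
        (fun y hy => by
          obtain ⟨r, hr, rfl⟩ := hsub hy
          exact (hμcont r hr).continuousWithinAt)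
        (fun y hy => by
          obtain ⟨r, hr, rfl⟩ := hsub (Set.Ioo_subset_Icc_self hy)
          exact hd2 _ (hUt r hr))
      obtain ⟨r, hr, rfl⟩ := hsub (Set.Ioo_subset_Icc_self hc)
      refine ⟨r, hr, ?_⟩
      rw [eq_div_iff (by intro h; apply hx0; linarith)] at hcs
      linear_combination -hcs
  -- conclude F s ≤ F 0 = 0
  have hF0 : F 0 = 0 := by simp [hF]
  have hcontF : ContinuousOn F (Set.uIcc 0 s) := fun t ht =>
    (hF' t (hUt t ht)).continuousAt.continuousWithinAt
  have hFs : F s ≤ 0 := by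
    rcases lt_trichotomy s 0 with hneg | rfl | hposs
    · -- s < 0 : F monotone on [s, 0], so F s ≤ F 0
      have huIcc : Set.uIcc 0 s = Set.Icc s 0 := by
        rw [Set.uIcc_of_ge hneg.le]
      have hmono : MonotoneOn F (Set.Icc s 0) := by
        apply monotoneOn_of_deriv_nonneg (convex_Icc s 0) (huIcc ▸ hcontF)
        · intro x hx
          rw [interior_Icc] at hx
          exact (hF' x (hUt x (by rw [huIcc]; exact Set.Ioo_subset_Icc_self hx))).differentiableAt.differentiableWithinAt
        · intro x hx
          rw [interior_Icc] at hx
          have hxmem : x ∈ Set.uIcc 0 s := by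
            rw [huIcc]; exact Set.Ioo_subset_Icc_self hx
          rw [(hF' x (hUt x hxmem)).deriv]
          obtain ⟨r, hr, hrs⟩ := hderiv_le x hxmem (ne_of_lt hx.2)
          have := hbound r hr
          have hx2 : x < 0 := hx.2
          nlinarith [hpos u hu]
      have := hmono (Set.left_mem_Icc.2 hneg.le) (Set.right_mem_Icc.2 hneg.le) hneg.le
      rw [hF0] at this
      exact this
    · rw [hF0]
    · -- s > 0 : F antitone on [0, s]
      have huIcc : Set.uIcc 0 s = Set.Icc 0 s := by
        rw [Set.uIcc_of_le hposs.le]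
      have hanti : AntitoneOn F (Set.Icc 0 s) := by
        apply antitoneOn_of_deriv_nonpos (convex_Icc 0 s) (huIcc ▸ hcontF)
        · intro x hx
          rw [interior_Icc] at hx
          exact (hF' x (hUt x (by rw [huIcc]; exact Set.Ioo_subset_Icc_self hx))).differentiableAt.differentiableWithinAt
        · intro x hx
          rw [interior_Icc] at hx
          have hxmem : x ∈ Set.uIcc 0 s := by
            rw [huIcc]; exact Set.Ioo_subset_Icc_self hx
          rw [(hF' x (hUt x hxmem)).deriv]
          obtain ⟨r, hr, hrs⟩ := hderiv_le x hxmem (ne_of_gt hx.1)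
          have := hbound r hr
          have hx1 : 0 < x := hx.1
          nlinarith [hpos u hu]
      have := hanti (Set.left_mem_Icc.2 hposs.le) (Set.right_mem_Icc.2 hposs.le) hposs.le
      rw [hF0] at this
      exact this
  have : ψ (u + s) - ψ u - s * μ u - s ^ 2 * μ' u ≤ 0 := hFs
  linarith
end

section
/- Let λ > 0, L > 0, and let a_1, …, a_n ∈ ℝ^d with ‖a_t‖₂ ≤ L for all t. Define V_0 = λI and V_t = V_0 + Σ_{s=1}^t a_s a_sᵀ. Then for any b > 0, the number of indices t ∈ [n] with ‖a_t‖_{V_{t-1}^{-1}} ≥ b is at most (3d / log(1+b²)) · log(1 + L²/(λ·log(1+b²))). -/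
open Finset Matrix
set_option maxHeartbeats 1000000

variable {d : ℕ}

lemma star_id (x : Fin d → ℝ) : star x = x := by ext i; simp

lemma vmv_mulVec (a x : Fin d → ℝ) : (vecMulVec a a) *ᵥ x = (a ⬝ᵥ x) • a := by
  ext i
  simp [vecMulVec, mulVec, dotProduct, Finset.mul_sum, mul_assoc, mul_comm, mul_left_comm]

lemma sum_mulVec' {ι : Type*} (T : Finset ι) (M : ι → Matrix (Fin d) (Fin d) ℝ) (x : Fin d → ℝ) :
    (∑ s ∈ T, M s) *ᵥ x = ∑ s ∈ T, (M s) *ᵥ x := by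
  classical
  induction T using Finset.cons_induction with
  | empty => simp
  | cons a s ha ih => rw [Finset.cons_eq_insert, Finset.sum_insert ha, Finset.sum_insert ha, add_mulVec, ih]

lemma dot_sum' {ι : Type*} (T : Finset ι) (g : ι → Fin d → ℝ) (x : Fin d → ℝ) :
    x ⬝ᵥ (∑ s ∈ T, g s) = ∑ s ∈ T, x ⬝ᵥ g s := by
  classical
  induction T using Finset.cons_induction with
  | empty => simp
  | cons a s ha ih => rw [Finset.cons_eq_insert, Finset.sum_insert ha, Finset.sum_insert ha, dotProduct_add, ih]

lemma qf_eq {ι : Type*} (lam : ℝ) (T : Finset ι) (f : ι → Fin d → ℝ) (x : Fin d → ℝ) :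
    x ⬝ᵥ (lam • (1 : Matrix (Fin d) (Fin d) ℝ) + ∑ s ∈ T, vecMulVec (f s) (f s)) *ᵥ x
      = lam * (x ⬝ᵥ x) + ∑ s ∈ T, (f s ⬝ᵥ x) ^ 2 := by
  rw [add_mulVec, dotProduct_add, smul_mulVec, one_mulVec, dotProduct_smul, smul_eq_mul]
  congr 1
  rw [sum_mulVec', dot_sum']
  refine Finset.sum_congr rfl fun s _ => ?_
  rw [vmv_mulVec, dotProduct_smul, smul_eq_mul, dotProduct_comm]
  ring

lemma isHerm_model {ι : Type*} (lam : ℝ) (T : Finset ι) (f : ι → Fin d → ℝ) :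
    (lam • (1 : Matrix (Fin d) (Fin d) ℝ) + ∑ s ∈ T, vecMulVec (f s) (f s)).IsHermitian := by
  unfold Matrix.IsHermitian
  rw [conjTranspose_add, conjTranspose_smul, conjTranspose_one, conjTranspose_sum]
  congr 1
  refine Finset.sum_congr rfl fun s _ => ?_
  ext i j
  simp [vecMulVec, conjTranspose_apply, mul_comm]

lemma dot_self_pos {x : Fin d → ℝ} (hx : x ≠ 0) : 0 < x ⬝ᵥ x := by
  have := dotProduct_self_star_pos_iff (v := x)
  rw [star_id] at this
  exact this.mpr hx

lemma posDef_model {ι : Type*} {lam : ℝ} (hlam : 0 < lam) (T : Finset ι) (f : ι → Fin d → ℝ) :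
    (lam • (1 : Matrix (Fin d) (Fin d) ℝ) + ∑ s ∈ T, vecMulVec (f s) (f s)).PosDef := by
  refine Matrix.PosDef.of_dotProduct_mulVec_pos (isHerm_model lam T f) fun x hx => ?_
  rw [star_id, qf_eq]
  have h2 : 0 ≤ ∑ s ∈ T, (f s ⬝ᵥ x) ^ 2 := Finset.sum_nonneg fun s _ => sq_nonneg _
  nlinarith [dot_self_pos hx]

variable {d : ℕ}

lemma star_id' (x : Fin d → ℝ) : star x = x := by ext i; simp

lemma herm_dot {A : Matrix (Fin d) (Fin d) ℝ} (hA : A.IsHermitian) (u v : Fin d → ℝ) :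
    u ⬝ᵥ A *ᵥ v = (A *ᵥ u) ⬝ᵥ v := by
  have hT : Aᵀ = A := by
    ext i j
    have := congr_fun (congr_fun hA.eq i) j
    simpa [conjTranspose_apply] using this
  rw [dotProduct_mulVec, ← Matrix.mulVec_transpose, hT]

lemma psd_qf_nonneg {A : Matrix (Fin d) (Fin d) ℝ} (hA : A.PosSemidef) (x : Fin d → ℝ) :
    0 ≤ x ⬝ᵥ A *ᵥ x := by
  have := hA.dotProduct_mulVec_nonneg x
  rwa [star_id'] at this

lemma pd_qf_pos {A : Matrix (Fin d) (Fin d) ℝ} (hA : A.PosDef) {x : Fin d → ℝ} (hx : x ≠ 0) :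
    0 < x ⬝ᵥ A *ᵥ x := by
  have := hA.dotProduct_mulVec_pos hx
  rwa [star_id'] at this

lemma pd_mul_inv {A : Matrix (Fin d) (Fin d) ℝ} (hA : A.PosDef) : A * A⁻¹ = 1 :=
  Matrix.mul_nonsing_inv _ (isUnit_iff_ne_zero.mpr hA.det_pos.ne')

lemma inv_qf_mono {A B : Matrix (Fin d) (Fin d) ℝ} (hA : A.PosDef) (hB : B.PosDef)
    (h : ∀ x, x ⬝ᵥ A *ᵥ x ≤ x ⬝ᵥ B *ᵥ x) (x : Fin d → ℝ) :
    x ⬝ᵥ B⁻¹ *ᵥ x ≤ x ⬝ᵥ A⁻¹ *ᵥ x := by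
  set u := B⁻¹ *ᵥ x with hu
  set v := A⁻¹ *ᵥ x with hv
  have hAv : A *ᵥ v = x := by rw [hv, mulVec_mulVec, pd_mul_inv hA, one_mulVec]
  have hBu : B *ᵥ u = x := by rw [hu, mulVec_mulVec, pd_mul_inv hB, one_mulVec]
  have key : 0 ≤ (u - v) ⬝ᵥ A *ᵥ (u - v) := psd_qf_nonneg hA.posSemidef _
  have expand : (u - v) ⬝ᵥ A *ᵥ (u - v)
      = u ⬝ᵥ A *ᵥ u - (u ⬝ᵥ x) - (x ⬝ᵥ u) + x ⬝ᵥ v := by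
    rw [mulVec_sub, dotProduct_sub, sub_dotProduct, sub_dotProduct]
    have h1 : u ⬝ᵥ A *ᵥ v = u ⬝ᵥ x := by rw [hAv]
    have h2 : v ⬝ᵥ A *ᵥ u = x ⬝ᵥ u := by rw [herm_dot hA.isHermitian, hAv]
    have h3 : v ⬝ᵥ A *ᵥ v = x ⬝ᵥ v := by rw [herm_dot hA.isHermitian, hAv]
    rw [h1, h2, h3]; ring
  have hub : u ⬝ᵥ A *ᵥ u ≤ u ⬝ᵥ x := by
    have := h u; rwa [hBu] at this
  have hux : u ⬝ᵥ x = x ⬝ᵥ u := dotProduct_comm _ _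
  have : x ⬝ᵥ u ≤ x ⬝ᵥ v := by nlinarith [key, expand, hub]
  exact this

lemma det_rank_one_update {A : Matrix (Fin d) (Fin d) ℝ} (hA : A.PosDef) (x : Fin d → ℝ) :
    (A + vecMulVec x x).det = A.det * (1 + x ⬝ᵥ A⁻¹ *ᵥ x) := by
  have hu : IsUnit A.det := isUnit_iff_ne_zero.mpr hA.det_pos.ne'
  rw [vecMulVec_eq Unit, Matrix.det_add_replicateCol_mul_replicateRow hu]
  congr 1
  rw [det_unique, Matrix.add_apply, Matrix.one_apply_eq, ← Matrix.replicateRow_vecMul,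
    Matrix.replicateRow_mul_replicateCol_apply, ← dotProduct_mulVec]

variable {d : ℕ}

lemma trace_eq_sum_eig {A : Matrix (Fin d) (Fin d) ℝ} (hA : A.IsHermitian) :
    A.trace = ∑ i, hA.eigenvalues i := by
  rw [hA.trace_eq_sum_eigenvalues]
  simp

lemma det_le_trace_pow {A : Matrix (Fin d) (Fin d) ℝ} (hA : A.PosSemidef) (hd : 0 < d) :
    A.det ≤ (A.trace / d) ^ d := by
  have hdet : A.det = ∏ i, hA.1.eigenvalues i := by
    have := hA.1.det_eq_prod_eigenvalues
    simpa using this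
  have htr : A.trace = ∑ i, hA.1.eigenvalues i := trace_eq_sum_eig hA.1
  have hnn : ∀ i, 0 ≤ hA.1.eigenvalues i := hA.eigenvalues_nonneg
  have hw : ∑ _i : Fin d, (1 / d : ℝ) = 1 := by
    simp [Finset.sum_const]
    field_simp
  have amgm := Real.geom_mean_le_arith_mean_weighted Finset.univ (fun _ => (1 / d : ℝ))
      (fun i => hA.1.eigenvalues i) (fun i _ => by positivity) hw (fun i _ => hnn i)
  -- amgm : ∏ i, (μ i) ^ (1/d : ℝ) ≤ ∑ i, (1/d) * μ i
  have hsum : ∑ i, (1 / d : ℝ) * hA.1.eigenvalues i = A.trace / d := by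
    rw [htr, ← Finset.mul_sum]; ring
  have hlhs : (∏ i, (hA.1.eigenvalues i) ^ ((1:ℝ) / d)) ^ d = ∏ i, hA.1.eigenvalues i := by
    rw [← Finset.prod_pow]
    refine Finset.prod_congr rfl fun i _ => ?_
    rw [← Real.rpow_natCast ((hA.1.eigenvalues i) ^ ((1:ℝ)/d)) d, ← Real.rpow_mul (hnn i)]
    rw [one_div, inv_mul_cancel₀ (by exact_mod_cast hd.ne')]
    exact Real.rpow_one _
  have hpow : (∏ i, (hA.1.eigenvalues i) ^ ((1:ℝ) / d)) ^ d ≤ (A.trace / d) ^ d := by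
    apply pow_le_pow_left₀
    · exact Finset.prod_nonneg fun i _ => Real.rpow_nonneg (hnn i) _
    · rw [← hsum]; exact amgm
  rw [hdet, ← hlhs]
  exact hpow

lemma arith_key (d m : ℕ) (c lam L : ℝ) (hc : 0 < c) (hlam : 0 < lam) (hL : 0 < L)
    (h : (m : ℝ) * c ≤ d * Real.log (1 + m * L ^ 2 / (d * lam))) :
    (m : ℝ) ≤ 3 * d / c * Real.log (1 + L ^ 2 / (lam * c)) := by
  set R : ℝ := L ^ 2 / lam with hR
  have hRpos : 0 < R := by positivity
  have hA0 : 0 ≤ Real.log (1 + L ^ 2 / (lam * c)) := by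
    have : (0:ℝ) ≤ L ^ 2 / (lam * c) := by positivity
    exact Real.log_nonneg (by linarith)
  rcases Nat.eq_zero_or_pos m with hm | hm
  · subst hm; simp; positivity
  rcases Nat.eq_zero_or_pos d with hd | hd
  · subst hd
    simp only [Nat.cast_zero, zero_mul] at h
    have : (0:ℝ) < m * c := by positivity
    linarith
  have hmR : (1:ℝ) ≤ m := by exact_mod_cast hm
  have hdR : (1:ℝ) ≤ d := by exact_mod_cast hd
  have hdpos : (0:ℝ) < d := by linarith
  have harg : (0:ℝ) < 1 + m * L ^ 2 / (d * lam) := by positivity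
  -- rewrite argument as 1 + m*R/d
  have hargeq : 1 + (m:ℝ) * L ^ 2 / (d * lam) = 1 + m * R / d := by
    rw [hR]; field_simp
  rw [hargeq] at h
  -- step 1: c ≤ R
  have hcR : c ≤ R := by
    have hlog : Real.log (1 + (m:ℝ) * R / d) ≤ m * R / d := by
      have := Real.log_le_sub_one_of_pos (x := 1 + (m:ℝ) * R / d) (by positivity)
      linarith
    have : (m:ℝ) * c ≤ m * R := by
      calc (m:ℝ) * c ≤ d * Real.log (1 + m * R / d) := h
        _ ≤ d * (m * R / d) := by
            apply mul_le_mul_of_nonneg_left hlog hdpos.le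
        _ = m * R := by field_simp
    nlinarith
  set A : ℝ := Real.log (1 + R / c) with hAdef
  have hAeq : Real.log (1 + L ^ 2 / (lam * c)) = A := by
    rw [hAdef, hR]; ring_nf
  have hA2 : Real.log 2 ≤ A := by
    rw [hAdef]
    apply Real.log_le_log (by norm_num)
    have : 1 ≤ R / c := (one_le_div hc).mpr hcR
    linarith
  have hlog32 : Real.log 3 - 1 ≤ Real.log 2 := by
    have h32 : Real.log 3 - Real.log 2 = Real.log (3 / 2) := by
      rw [Real.log_div (by norm_num) (by norm_num)]
    have := Real.log_le_sub_one_of_pos (x := (3/2 : ℝ)) (by norm_num)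
    linarith
  have hApos : 0 < A := lt_of_lt_of_le (Real.log_pos (by norm_num)) hA2
  rw [hAeq]
  rcases le_or_gt ((m:ℝ) * c) d with hcase | hcase
  · -- m ≤ d / c, so m*R/d ≤ R/c
    have hmono : Real.log (1 + (m:ℝ) * R / d) ≤ A := by
      rw [hAdef]
      apply Real.log_le_log (by positivity)
      have : (m:ℝ) * R / d ≤ R / c := by
        rw [div_le_div_iff₀ hdpos hc]
        nlinarith
      linarith
    have : (m:ℝ) * c ≤ d * A := h.trans (mul_le_mul_of_nonneg_left hmono hdpos.le)
    rw [div_mul_eq_mul_div, le_div_iff₀ hc]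
    nlinarith
  · -- d ≤ m*c
    set u : ℝ := m * c / d with hu
    have hu1 : 1 ≤ u := by rw [hu, le_div_iff₀ hdpos]; linarith
    have hupos : 0 < u := by linarith
    have hbound : 1 + (m:ℝ) * R / d ≤ u * (1 + R / c) := by
      have : u * (1 + R / c) = u + u * R / c := by ring
      rw [this, hu]
      have he : (m:ℝ) * c / d * R / c = m * R / d := by field_simp
      rw [he]
      have : (1:ℝ) ≤ m * c / d := hu1
      linarith
    have hlogu : Real.log u ≤ u / 3 + Real.log 3 - 1 := by
      have h1 : Real.log (u / 3) ≤ u / 3 - 1 := Real.log_le_sub_one_of_pos (by positivity)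
      have h2 : Real.log (u / 3) = Real.log u - Real.log 3 := Real.log_div hupos.ne' (by norm_num)
      linarith
    have hmain : (m:ℝ) * c ≤ d * (Real.log u + A) := by
      calc (m:ℝ) * c ≤ d * Real.log (1 + m * R / d) := h
        _ ≤ d * Real.log (u * (1 + R / c)) := by
            apply mul_le_mul_of_nonneg_left _ hdpos.le
            apply Real.log_le_log (by positivity) hbound
        _ = d * (Real.log u + A) := by
            rw [Real.log_mul hupos.ne' (by positivity), hAdef]
    -- substitute log u bound : m*c ≤ d*(u/3 + log3 - 1 + A), d*u/3 = m*c/3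
    have hdu : (d:ℝ) * (u / 3) = m * c / 3 := by rw [hu]; field_simp
    have h5 : (d:ℝ) * Real.log u ≤ d * (u / 3 + Real.log 3 - 1) :=
      mul_le_mul_of_nonneg_left hlogu hdpos.le
    have : (m:ℝ) * c ≤ m * c / 3 + d * (Real.log 3 - 1) + d * A := by
      have h6 : (d:ℝ) * (u / 3 + Real.log 3 - 1) = m * c / 3 + d * (Real.log 3 - 1) := by
        rw [mul_sub, mul_add, hdu]; ring
      have h7 : (d:ℝ) * (Real.log u + A) = d * Real.log u + d * A := by ring
      linarith [hmain, h5, h6, h7]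
    have hfin : (2/3 : ℝ) * (m * c) ≤ 2 * (d * A) := by
      have hd3 : d * (Real.log 3 - 1) ≤ d * A :=
        mul_le_mul_of_nonneg_left (by linarith) hdpos.le
      linarith
    rw [div_mul_eq_mul_div, le_div_iff₀ hc]
    linarith [hfin]

lemma dot_self_nonneg' (x : Fin d → ℝ) : 0 ≤ x ⬝ᵥ x :=
  Finset.sum_nonneg fun i _ => mul_self_nonneg _

lemma trace_vmv (x : Fin d → ℝ) : (vecMulVec x x).trace = x ⬝ᵥ x := by
  simp [Matrix.trace, Matrix.diag, vecMulVec, dotProduct]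

theorem stmt_5 (d n : ℕ) (lam L b : ℝ) (hlam : 0 < lam) (hL : 0 < L) (hb : 0 < b)
    (a : ℕ → Fin d → ℝ)
    (ha : ∀ t ∈ Finset.Icc 1 n, Real.sqrt (a t ⬝ᵥ a t) ≤ L)
    (V : ℕ → Matrix (Fin d) (Fin d) ℝ)
    (hV : ∀ t, V t = lam • (1 : Matrix (Fin d) (Fin d) ℝ)
        + ∑ s ∈ Finset.Icc 1 t, Matrix.vecMulVec (a s) (a s)) :
    (((Finset.Icc 1 n).filter fun t =>
        b ≤ Real.sqrt (a t ⬝ᵥ (V (t - 1))⁻¹.mulVec (a t))).card : ℝ)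
      ≤ (3 * d / Real.log (1 + b ^ 2))
          * Real.log (1 + L ^ 2 / (lam * Real.log (1 + b ^ 2))) := by
  have hc : 0 < Real.log (1 + b ^ 2) := Real.log_pos (by nlinarith)
  set c : ℝ := Real.log (1 + b ^ 2) with hcdef
  have hA0 : 0 ≤ Real.log (1 + L ^ 2 / (lam * c)) := by
    have : (0:ℝ) ≤ L ^ 2 / (lam * c) := by positivity
    exact Real.log_nonneg (by linarith)
  rcases Nat.eq_zero_or_pos d with hd0 | hdpos
  · subst hd0
    have hempty : ((Finset.Icc 1 n).filter fun t =>
        b ≤ Real.sqrt (a t ⬝ᵥ (V (t - 1))⁻¹.mulVec (a t))) = ∅ := by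
      apply Finset.filter_false_of_mem
      intro t _
      have h0 : a t ⬝ᵥ (V (t - 1))⁻¹.mulVec (a t) = 0 := by
        simp [dotProduct]
      rw [h0, Real.sqrt_zero]
      exact not_le.mpr hb
    rw [hempty]
    simp
  -- main case
  set S : Finset ℕ := (Finset.Icc 1 n).filter
      (fun t => b ≤ Real.sqrt (a t ⬝ᵥ (V (t - 1))⁻¹.mulVec (a t))) with hSdef
  set m : ℕ := S.card with hmdef
  set t : Fin m ↪o ℕ := S.orderEmbOfFin rfl with htdef
  have htS : ∀ k : Fin m, t k ∈ S := fun k => Finset.orderEmbOfFin_mem S rfl k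
  set g : ℕ → ℕ := fun j => if h : j < m then t ⟨j, h⟩ else 0 with hgdef
  set y : ℕ → (Fin d → ℝ) := fun j => a (g j) with hydef
  set W : ℕ → Matrix (Fin d) (Fin d) ℝ := fun k =>
    lam • (1 : Matrix (Fin d) (Fin d) ℝ) + ∑ j ∈ Finset.range k, vecMulVec (y j) (y j)
    with hWdef
  have hWpd : ∀ k, (W k).PosDef := fun k => posDef_model hlam _ _
  -- the key pointwise bound
  have claim1 : ∀ k : ℕ, ∀ hk : k < m, b ^ 2 ≤ y k ⬝ᵥ (W k)⁻¹ *ᵥ (y k) := by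
    intro k hk
    have hgk : g k = t ⟨k, hk⟩ := by rw [hgdef]; simp [hk]
    set τ : ℕ := t ⟨k, hk⟩ with hτ
    have hτS : τ ∈ S := htS _
    have hτfacts := Finset.mem_filter.mp hτS
    have hτIcc : τ ∈ Finset.Icc 1 n := hτfacts.1
    have hτ1 : 1 ≤ τ := (Finset.mem_Icc.mp hτIcc).1
    have hbτ : b ≤ Real.sqrt (a τ ⬝ᵥ (V (τ - 1))⁻¹.mulVec (a τ)) := hτfacts.2
    have hVpd : (V (τ - 1)).PosDef := by rw [hV]; exact posDef_model hlam _ _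
    have hq0 : 0 ≤ a τ ⬝ᵥ (V (τ - 1))⁻¹ *ᵥ (a τ) :=
      psd_qf_nonneg hVpd.inv.posSemidef _
    have hb2 : b ^ 2 ≤ a τ ⬝ᵥ (V (τ - 1))⁻¹ *ᵥ (a τ) := by
      have := pow_le_pow_left₀ hb.le hbτ 2
      rwa [Real.sq_sqrt hq0] at this
    have hmono : ∀ x, x ⬝ᵥ (W k) *ᵥ x ≤ x ⬝ᵥ (V (τ - 1)) *ᵥ x := by
      intro x
      rw [hV, hWdef]
      rw [qf_eq, qf_eq]
      have hsum : ∑ j ∈ Finset.range k, (y j ⬝ᵥ x) ^ 2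
          ≤ ∑ s ∈ Finset.Icc 1 (τ - 1), (a s ⬝ᵥ x) ^ 2 := by
        have hre : ∀ j ∈ Finset.range k, (y j ⬝ᵥ x) ^ 2 = (a (g j) ⬝ᵥ x) ^ 2 := by
          intro j _; rw [hydef]
        rw [Finset.sum_congr rfl hre]
        have hinj : ∀ i ∈ Finset.range k, ∀ j ∈ Finset.range k, g i = g j → i = j := by
          intro i hi j hj hij
          have hi' : i < m := lt_trans (Finset.mem_range.mp hi) hk
          have hj' : j < m := lt_trans (Finset.mem_range.mp hj) hk
          rw [hgdef] at hij
          simp only [hi', hj', dif_pos] at hij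
          have := t.injective hij
          exact Fin.mk.inj_iff.mp this
        rw [← Finset.sum_image (f := fun s => (a s ⬝ᵥ x) ^ 2) (g := g) hinj]
        apply Finset.sum_le_sum_of_subset_of_nonneg
        · intro s hs
          rcases Finset.mem_image.mp hs with ⟨j, hj, rfl⟩
          have hjk : j < k := Finset.mem_range.mp hj
          have hjm : j < m := lt_trans hjk hk
          have hgj : g j = t ⟨j, hjm⟩ := by rw [hgdef]; simp [hjm]
          have hmem : g j ∈ S := by rw [hgj]; exact htS _
          have h1 : 1 ≤ g j := (Finset.mem_Icc.mp (Finset.mem_filter.mp hmem).1).1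
          have hlt : g j < τ := by
            rw [hgj, hτ]
            exact t.strictMono (by exact hjk)
          exact Finset.mem_Icc.mpr ⟨h1, Nat.le_sub_one_of_lt hlt⟩
        · intro s _ _; exact sq_nonneg _
      linarith [hsum]
    have hinv := inv_qf_mono (hWpd k) hVpd hmono (a τ)
    have hyk : y k = a τ := by rw [hydef]; simp only; rw [hgk]
    rw [hyk]
    exact le_trans hb2 hinv
  -- determinant growth
  have grow : ∀ k : ℕ, k < m → (1 + b ^ 2) * (W k).det ≤ (W (k + 1)).det := by
    intro k hk
    have hWk1 : W (k + 1) = W k + vecMulVec (y k) (y k) := by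
      rw [hWdef]
      simp only
      rw [Finset.sum_range_succ, ← add_assoc]
    rw [hWk1, det_rank_one_update (hWpd k) (y k)]
    have := claim1 k hk
    have hdet := (hWpd k).det_pos
    nlinarith
  -- induction
  have ind : ∀ k : ℕ, k ≤ m → lam ^ d * (1 + b ^ 2) ^ k ≤ (W k).det := by
    intro k
    induction k with
    | zero =>
      intro _
      have : W 0 = lam • (1 : Matrix (Fin d) (Fin d) ℝ) := by
        rw [hWdef]; simp
      rw [this, Matrix.det_smul]
      simp [Fintype.card_fin]
    | succ k ih =>
      intro hk1
      have hk : k < m := hk1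
      have h1 := ih (le_of_lt hk)
      have h2 := grow k hk
      have hbb : (0:ℝ) < 1 + b ^ 2 := by nlinarith
      calc lam ^ d * (1 + b ^ 2) ^ (k + 1)
          = (1 + b ^ 2) * (lam ^ d * (1 + b ^ 2) ^ k) := by ring
        _ ≤ (1 + b ^ 2) * (W k).det := by nlinarith
        _ ≤ (W (k + 1)).det := h2
  have hfinal := ind m le_rfl
  -- trace bound
  have htr : (W m).trace ≤ lam * d + m * L ^ 2 := by
    rw [hWdef]
    simp only
    rw [Matrix.trace_add, Matrix.trace_smul, Matrix.trace_one, Matrix.trace_sum]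
    have hbound : ∀ j ∈ Finset.range m, (vecMulVec (y j) (y j)).trace ≤ L ^ 2 := by
      intro j hj
      have hjm : j < m := Finset.mem_range.mp hj
      rw [trace_vmv]
      have hgj : g j = t ⟨j, hjm⟩ := by rw [hgdef]; simp [hjm]
      have hmem : g j ∈ Finset.Icc 1 n := by
        rw [hgj]
        exact (Finset.mem_filter.mp (htS ⟨j, hjm⟩)).1
      have := ha (g j) hmem
      have hnn := dot_self_nonneg' (a (g j))
      have : a (g j) ⬝ᵥ a (g j) ≤ L ^ 2 := by
        have hsq := pow_le_pow_left₀ (Real.sqrt_nonneg _) this 2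
        rwa [Real.sq_sqrt hnn] at hsq
      rw [hydef]
      exact this
    have hs := Finset.sum_le_sum hbound
    rw [Finset.sum_const, Finset.card_range, nsmul_eq_mul] at hs
    simp only [smul_eq_mul, Fintype.card_fin]
    linarith
  have htrnn : 0 ≤ (W m).trace := by
    rw [hWdef]
    simp only
    rw [Matrix.trace_add, Matrix.trace_smul, Matrix.trace_one, Matrix.trace_sum]
    have : 0 ≤ ∑ j ∈ Finset.range m, (vecMulVec (y j) (y j)).trace := by
      apply Finset.sum_nonneg
      intro j _
      rw [trace_vmv]; exact dot_self_nonneg' _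
    simp only [smul_eq_mul, Fintype.card_fin]
    have : (0:ℝ) ≤ lam * d := by positivity
    linarith
  have hdetle : (W m).det ≤ (lam + m * L ^ 2 / d) ^ d := by
    have h1 := det_le_trace_pow (hWpd m).posSemidef hdpos
    have hdr : (0:ℝ) < d := by exact_mod_cast hdpos
    have h2 : (W m).trace / d ≤ lam + m * L ^ 2 / d := by
      rw [div_le_iff₀ hdr]
      have : (lam + m * L ^ 2 / d) * d = lam * d + m * L ^ 2 := by field_simp
      rw [this]
      exact htr
    have h3 : (0:ℝ) ≤ (W m).trace / d := by positivity
    exact h1.trans (pow_le_pow_left₀ h3 h2 d)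
  -- combine
  have hkey : lam ^ d * (1 + b ^ 2) ^ m ≤ (lam + m * L ^ 2 / d) ^ d :=
    hfinal.trans hdetle
  have hdr : (0:ℝ) < d := by exact_mod_cast hdpos
  have hlog : (m:ℝ) * c ≤ d * Real.log (1 + m * L ^ 2 / (d * lam)) := by
    have hl : (0:ℝ) < lam ^ d * (1 + b ^ 2) ^ m := by positivity
    have hlog1 := Real.log_le_log hl hkey
    rw [Real.log_mul (by positivity) (by positivity), Real.log_pow, Real.log_pow,
      Real.log_pow] at hlog1
    have hre : lam + (m:ℝ) * L ^ 2 / d = lam * (1 + m * L ^ 2 / (d * lam)) := by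
      field_simp
    rw [hre, Real.log_mul hlam.ne' (by positivity)] at hlog1
    have hexp : (d:ℝ) * (Real.log lam + Real.log (1 + m * L ^ 2 / (d * lam)))
        = d * Real.log lam + d * Real.log (1 + m * L ^ 2 / (d * lam)) := by ring
    have : (m:ℝ) * Real.log (1 + b ^ 2) ≤ d * Real.log (1 + m * L ^ 2 / (d * lam)) := by
      linarith [hlog1, hexp]
    rw [hcdef]
    exact this
  have := arith_key d m c lam L hc hlam hL hlog
  rw [hmdef] at this
  exact this
end

section
/- Let α: ℝ×ℝ → ℝ satisfy α(u,u') ≥ μ'(u)/(1 + M|u−u'|) for all u, u', where μ' ≥ 0 and M > 0. For vectors x_1,…,x_t ∈ ℝ^d with max_i |x_iᵀ(θ−θ')| ≤ D, define G = λI + Σ_i α(x_iᵀθ, x_iᵀθ') x_i x_iᵀ and H = λI + Σ_i μ'(x_iᵀθ) x_i x_iᵀ. Then H ⪯ (1 + MD)·G in the Loewner order. -/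
open Finset Matrix

lemma aux1 {d : ℕ} (c : ℝ) (hc : 0 ≤ c) (v : Fin d → ℝ) :
    (c • Matrix.vecMulVec v v).PosSemidef := by
  rw [Matrix.posSemidef_iff_dotProduct_mulVec]
  constructor
  · ext i j
    simp [Matrix.IsHermitian, Matrix.vecMulVec_apply, mul_comm]
  · intro y
    have : (star y) ⬝ᵥ ((c • Matrix.vecMulVec v v) *ᵥ y) = c * (v ⬝ᵥ y) * (v ⬝ᵥ y) := by
      simp [dotProduct, Matrix.mulVec, Matrix.vecMulVec_apply, Finset.mul_sum,
        Finset.sum_mul, mul_assoc, mul_comm, mul_left_comm]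
    rw [this, mul_assoc]
    exact mul_nonneg hc (mul_self_nonneg _)

lemma aux2 {d : ℕ} (c : ℝ) (hc : 0 ≤ c) :
    (c • (1 : Matrix (Fin d) (Fin d) ℝ)).PosSemidef := by
  rw [Matrix.smul_one_eq_diagonal]
  exact Matrix.PosSemidef.diagonal (fun i => hc)

lemma aux3 {d t : ℕ} (f : Fin t → Matrix (Fin d) (Fin d) ℝ)
    (h : ∀ i, (f i).PosSemidef) : (∑ i, f i).PosSemidef := by
  classical
  induction (Finset.univ : Finset (Fin t)) using Finset.induction with
  | empty => simpa using Matrix.PosSemidef.zero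
  | insert _ _ hx ih => rw [Finset.sum_insert hx]; exact (h _).add ih

theorem stmt_10 (d t : ℕ) (M lam D : ℝ) (hM : 0 < M) (hlam : 0 < lam) (hD : 0 ≤ D)
    (μ' : ℝ → ℝ) (hpos : ∀ u, 0 ≤ μ' u)
    (α : ℝ → ℝ → ℝ)
    (hα : ∀ u u' : ℝ, μ' u / (1 + M * |u - u'|) ≤ α u u')
    (x : Fin t → Fin d → ℝ) (θ θ' : Fin d → ℝ)
    (hDbound : ∀ i, |x i ⬝ᵥ (θ - θ')| ≤ D) :
    ((1 + M * D) • (lam • (1 : Matrix (Fin d) (Fin d) ℝ)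
        + ∑ i, α (x i ⬝ᵥ θ) (x i ⬝ᵥ θ') • Matrix.vecMulVec (x i) (x i))
      - (lam • (1 : Matrix (Fin d) (Fin d) ℝ)
        + ∑ i, μ' (x i ⬝ᵥ θ) • Matrix.vecMulVec (x i) (x i))).PosSemidef := by
  have key : ∀ i : Fin t,
      0 ≤ (1 + M * D) * α (x i ⬝ᵥ θ) (x i ⬝ᵥ θ') - μ' (x i ⬝ᵥ θ) := by
    intro i
    have hΔ : |x i ⬝ᵥ θ - x i ⬝ᵥ θ'| ≤ D := by
      have := hDbound i
      rwa [dotProduct_sub] at this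
    have habs : 0 ≤ |x i ⬝ᵥ θ - x i ⬝ᵥ θ'| := abs_nonneg _
    have hden : (0:ℝ) < 1 + M * |x i ⬝ᵥ θ - x i ⬝ᵥ θ'| := by positivity
    have hα' := hα (x i ⬝ᵥ θ) (x i ⬝ᵥ θ')
    rw [div_le_iff₀ hden] at hα'
    have hαnn : 0 ≤ α (x i ⬝ᵥ θ) (x i ⬝ᵥ θ') := by
      have := hα (x i ⬝ᵥ θ) (x i ⬝ᵥ θ')
      have h0 : 0 ≤ μ' (x i ⬝ᵥ θ) / (1 + M * |x i ⬝ᵥ θ - x i ⬝ᵥ θ'|) :=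
        div_nonneg (hpos _) hden.le
      linarith
    nlinarith [mul_le_mul_of_nonneg_left hΔ hM.le]
  have hrw : ((1 + M * D) • (lam • (1 : Matrix (Fin d) (Fin d) ℝ)
        + ∑ i, α (x i ⬝ᵥ θ) (x i ⬝ᵥ θ') • Matrix.vecMulVec (x i) (x i))
      - (lam • (1 : Matrix (Fin d) (Fin d) ℝ)
        + ∑ i, μ' (x i ⬝ᵥ θ) • Matrix.vecMulVec (x i) (x i)))
      = (M * D * lam) • (1 : Matrix (Fin d) (Fin d) ℝ)
        + ∑ i, ((1 + M * D) * α (x i ⬝ᵥ θ) (x i ⬝ᵥ θ') - μ' (x i ⬝ᵥ θ))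
            • Matrix.vecMulVec (x i) (x i) := by
    rw [smul_add, Finset.smul_sum]
    simp only [smul_smul, sub_smul, Finset.sum_sub_distrib]
    rw [add_sub_add_comm, ← sub_smul]
    rw [show (1 + M * D) * lam - lam = M * D * lam from by ring]

  rw [hrw]
  exact (aux2 _ (by positivity)).add
    (aux3 _ fun i => aux1 _ (key i) (x i))
end

section
/- Let μ be twice differentiable with |μ''| ≤ M·μ' and μ' ≥ 0. Let x_⋆, x_1,…,x_n ∈ ℝ^d and θ_⋆ ∈ ℝ^d with x_tᵀθ_⋆ ≤ x_⋆ᵀθ_⋆ for all t. Then Σ_{t=1}^n μ'(x_tᵀθ_⋆) ≤ n·μ'(x_⋆ᵀθ_⋆) + M·Σ_{t=1}^n (μ(x_⋆ᵀθ_⋆) − μ(x_tᵀθ_⋆)). -/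
open Finset Matrix

theorem stmt_15 (μ μ' μ'' : ℝ → ℝ) (M : ℝ) (hM : 0 < M)
    (hd1 : ∀ u, HasDerivAt μ (μ' u) u)
    (hd2 : ∀ u, HasDerivAt μ' (μ'' u) u)
    (hpos : ∀ u, 0 ≤ μ' u)
    (hsc : ∀ u, |μ'' u| ≤ M * μ' u)
    (d n : ℕ) (xs : Fin d → ℝ) (x : Fin n → Fin d → ℝ) (θ : Fin d → ℝ)
    (hopt : ∀ t, x t ⬝ᵥ θ ≤ xs ⬝ᵥ θ) :
    ∑ t, μ' (x t ⬝ᵥ θ)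
      ≤ n * μ' (xs ⬝ᵥ θ) + M * ∑ t, (μ (xs ⬝ᵥ θ) - μ (x t ⬝ᵥ θ)) := by
  have hg : Monotone (fun u => M * μ u + μ' u) := by
    apply monotone_of_deriv_nonneg
    · exact fun u => (((hd1 u).const_mul M).add (hd2 u)).differentiableAt
    · intro u
      have h : deriv (fun u => M * μ u + μ' u) u = M * μ' u + μ'' u := (((hd1 u).const_mul M).add (hd2 u)).deriv
      rw [h]
      have := hsc u
      have : -(M * μ' u) ≤ μ'' u := neg_le_of_abs_le (hsc u)
      linarith
  have key : ∀ t : Fin n, μ' (x t ⬝ᵥ θ) ≤ μ' (xs ⬝ᵥ θ) + M * (μ (xs ⬝ᵥ θ) - μ (x t ⬝ᵥ θ)) := by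
    intro t
    have := hg (hopt t)
    simp only at this
    linarith
  calc ∑ t, μ' (x t ⬝ᵥ θ) ≤ ∑ t : Fin n, (μ' (xs ⬝ᵥ θ) + M * (μ (xs ⬝ᵥ θ) - μ (x t ⬝ᵥ θ))) :=
        Finset.sum_le_sum fun t _ => key t
    _ = n * μ' (xs ⬝ᵥ θ) + M * ∑ t, (μ (xs ⬝ᵥ θ) - μ (x t ⬝ᵥ θ)) := by
        rw [Finset.sum_add_distrib, ← Finset.mul_sum]
        simp [mul_comm]
end

section
/- Let λ > 0 and let G be a positive definite d×d matrix with G ⪰ λI. Suppose g, g' ∈ ℝ^d satisfy g − g' = G(θ − θ') for θ, θ' ∈ ℝ^d, and suppose ‖g − g'‖_{H^{-1}} ≤ γ for a positive definite H satisfying H ⪯ (1 + M‖θ − θ'‖)·G with M > 0. Then λ‖θ − θ'‖² ≤ γ² + Mγ²‖θ − θ'‖, and hence ‖θ − θ'‖ ≤ γ/√λ + Mγ²/λ. -/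
open Matrix

theorem symm_dot' (d : ℕ) (A : Matrix (Fin d) (Fin d) ℝ) (hA : A.IsHermitian)
    (a b : Fin d → ℝ) : a ⬝ᵥ A.mulVec b = b ⬝ᵥ A.mulVec a := by
  have hAt : Aᵀ = A := by
    have := hA.eq
    simpa [conjTranspose_eq_transpose_of_trivial] using this
  rw [dotProduct_mulVec, dotProduct_comm, ← mulVec_transpose, hAt]

theorem cs_posdef' (d : ℕ) (H : Matrix (Fin d) (Fin d) ℝ) (hH : H.PosDef) (x u : Fin d → ℝ) :
    (x ⬝ᵥ u) ^ 2 ≤ (x ⬝ᵥ H.mulVec x) * (u ⬝ᵥ H⁻¹.mulVec u) := by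
  have hHi : H⁻¹.PosDef := hH.inv
  have hinv : H * H⁻¹ = 1 := mul_nonsing_inv H hH.det_pos.ne'.isUnit
  have key : ∀ t : ℝ, 0 ≤ (u ⬝ᵥ H⁻¹.mulVec u) * (t * t) + (- 2 * (x ⬝ᵥ u)) * t + x ⬝ᵥ H.mulVec x := by
    intro t
    have h := hH.posSemidef.dotProduct_mulVec_nonneg (x - t • H⁻¹.mulVec u)
    simp only [star_trivial] at h
    have e1 : H.mulVec (H⁻¹.mulVec u) = u := by
      rw [mulVec_mulVec, hinv, one_mulVec]
    have e2 : x ⬝ᵥ H.mulVec (H⁻¹.mulVec u) = x ⬝ᵥ u := by rw [e1]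
    have e3 : (H⁻¹.mulVec u) ⬝ᵥ H.mulVec x = x ⬝ᵥ u := by
      rw [symm_dot' d H hH.1, e2]
    have e4 : (H⁻¹.mulVec u) ⬝ᵥ H.mulVec (H⁻¹.mulVec u) = u ⬝ᵥ H⁻¹.mulVec u := by
      rw [e1, dotProduct_comm]
    rw [sub_dotProduct, mulVec_sub, dotProduct_sub, dotProduct_sub] at h
    simp only [mulVec_smul, smul_dotProduct, dotProduct_smul, smul_eq_mul] at h
    rw [e2, e3, e4] at h
    nlinarith [h]
  have hd := discrim_le_zero key
  rw [discrim] at hd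
  nlinarith [hd]

set_option maxHeartbeats 1000000 in
theorem stmt_19 (d : ℕ) (lam M γ : ℝ) (hlam : 0 < lam) (hM : 0 < M) (hγ : 0 ≤ γ)
    (G H : Matrix (Fin d) (Fin d) ℝ) (hG : G.PosDef) (hH : H.PosDef)
    (hGlam : (G - lam • (1 : Matrix (Fin d) (Fin d) ℝ)).PosSemidef)
    (g g' θ θ' : Fin d → ℝ)
    (hgG : g - g' = G.mulVec (θ - θ'))
    (hHG : ((1 + M * Real.sqrt ((θ - θ') ⬝ᵥ (θ - θ'))) • G - H).PosSemidef)
    (hconf : Real.sqrt ((g - g') ⬝ᵥ H⁻¹.mulVec (g - g')) ≤ γ) :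
    lam * ((θ - θ') ⬝ᵥ (θ - θ'))
        ≤ γ ^ 2 + M * γ ^ 2 * Real.sqrt ((θ - θ') ⬝ᵥ (θ - θ')) ∧
    Real.sqrt ((θ - θ') ⬝ᵥ (θ - θ'))
        ≤ γ / Real.sqrt lam + M * γ ^ 2 / lam := by
  set x : Fin d → ℝ := θ - θ' with hx
  set u : Fin d → ℝ := g - g' with hu
  set s : ℝ := Real.sqrt (x ⬝ᵥ x) with hsdef
  -- basic facts
  have hxx : (0:ℝ) ≤ x ⬝ᵥ x := by
    have := dotProduct_star_self_nonneg x
    simpa using this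
  have hs0 : 0 ≤ s := Real.sqrt_nonneg _
  have hs2 : s ^ 2 = x ⬝ᵥ x := Real.sq_sqrt hxx
  -- u^T H⁻¹ u ≤ γ²
  have hHinn : (0:ℝ) ≤ u ⬝ᵥ H⁻¹.mulVec u := by
    have := hH.inv.posSemidef.dotProduct_mulVec_nonneg u
    simpa using this
  have hu2 : u ⬝ᵥ H⁻¹.mulVec u ≤ γ ^ 2 := by
    have h1 : Real.sqrt (u ⬝ᵥ H⁻¹.mulVec u) ≤ γ := hconf
    nlinarith [Real.sq_sqrt hHinn, Real.sqrt_nonneg (u ⬝ᵥ H⁻¹.mulVec u)]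
  -- λ x⬝x ≤ x^T G x
  have hlamx : lam * (x ⬝ᵥ x) ≤ x ⬝ᵥ G.mulVec x := by
    have h := hGlam.dotProduct_mulVec_nonneg x
    simp only [star_trivial, sub_mulVec, dotProduct_sub, smul_mulVec, one_mulVec,
      dotProduct_smul, smul_eq_mul] at h
    linarith
  -- x^T H x ≤ (1 + M s) x^T G x
  have hHle : x ⬝ᵥ H.mulVec x ≤ (1 + M * s) * (x ⬝ᵥ G.mulVec x) := by
    have h := hHG.dotProduct_mulVec_nonneg x
    simp only [star_trivial, sub_mulVec, dotProduct_sub, smul_mulVec,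
      dotProduct_smul, smul_eq_mul] at h
    linarith
  set q : ℝ := x ⬝ᵥ G.mulVec x with hq
  have hq0 : 0 ≤ q := by
    have := hG.posSemidef.dotProduct_mulVec_nonneg x
    simpa using this
  have hxu : x ⬝ᵥ u = q := by rw [hgG]
  have hcs : q ^ 2 ≤ (x ⬝ᵥ H.mulVec x) * (u ⬝ᵥ H⁻¹.mulVec u) := by
    have := cs_posdef' d H hH x u
    rwa [hxu] at this
  have hMs : (0:ℝ) ≤ 1 + M * s := by positivity
  have hqbound : q ≤ (1 + M * s) * γ ^ 2 := by
    rcases eq_or_lt_of_le hq0 with h0 | h0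
    · nlinarith
    · have h1 : q ^ 2 ≤ (1 + M * s) * q * γ ^ 2 := by
        calc q ^ 2 ≤ (x ⬝ᵥ H.mulVec x) * (u ⬝ᵥ H⁻¹.mulVec u) := hcs
          _ ≤ ((1 + M * s) * q) * γ ^ 2 := by
              apply mul_le_mul hHle hu2 hHinn (by nlinarith)
      have := le_of_mul_le_mul_right (by nlinarith : q * q ≤ ((1 + M * s) * γ ^ 2) * q) h0
      linarith
  have hpart1 : lam * (x ⬝ᵥ x) ≤ γ ^ 2 + M * γ ^ 2 * s := by nlinarith
  refine ⟨hpart1, ?_⟩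
  -- part 2
  set r : ℝ := Real.sqrt lam with hr
  have hr0 : 0 < r := Real.sqrt_pos.mpr hlam
  have hr2 : r ^ 2 = lam := Real.sq_sqrt hlam.le
  have hkey : lam * s ^ 2 ≤ γ ^ 2 + M * γ ^ 2 * s := by rw [hs2]; exact hpart1
  rw [← hr2]
  by_contra hcon
  push_neg at hcon
  have hgt : s > γ / r + M * γ ^ 2 / r ^ 2 := hcon
  have h1 : r ^ 2 * s > r * γ + M * γ ^ 2 := by
    have := mul_lt_mul_of_pos_left hgt (by positivity : (0:ℝ) < r ^ 2)
    calc r * γ + M * γ ^ 2 = r ^ 2 * (γ / r + M * γ ^ 2 / r ^ 2) := by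
          field_simp
      _ < r ^ 2 * s := this
  have hspos : 0 < s := by
    have h0 : (0:ℝ) ≤ γ / r + M * γ ^ 2 / r ^ 2 := by positivity
    linarith
  have hsγ : γ ≤ r * s := by
    have h2 : r * γ ≤ r * (r * s) := by nlinarith [h1, mul_nonneg hM.le (sq_nonneg γ)]
    exact le_of_mul_le_mul_left h2 hr0
  have h2 : (r * γ + M * γ ^ 2) * s < r ^ 2 * s * s := mul_lt_mul_of_pos_right h1 hspos
  have h3 : γ * γ ≤ γ * (r * s) := mul_le_mul_of_nonneg_left hsγ hγ
  nlinarith [h2, h3, hkey, hr2]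
end
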